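/- Let X be a normed space, C ⊆ X convex, T, U : C → C nonexpansive with common fixed point p, u, x₀ ∈ C. Take α_n = 2/(n+2) and β_n = β ∈ (0,1) constant, and define y_n = (1-α_n) T x_n + α_n u, x_{n+1} = (1-β) U y_n + β y_n. Let K be a positive real with K ≥ max{‖x₀-p‖, ‖u-p‖}. Then for all n ∈ ℕ: ‖x_n - x_{n+1}‖ ≤ 4K/(n+2). -/

import Mathlib

lemma ahm_comb_norm_sub {X : Type*} [NormedAddCommGroup X] [NormedSpace ℝ X]
    (t : ℝ) (ht0 : 0 ≤ t) (ht1 : t ≤ 1) (a b c : X) :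
    ‖(1 - t) • a + t • b - c‖ ≤ (1 - t) * ‖a - c‖ + t * ‖b - c‖ := by
  have h : (1 - t) • a + t • b - c = (1 - t) • (a - c) + t • (b - c) := by module
  rw [h]
  calc ‖(1 - t) • (a - c) + t • (b - c)‖ ≤ ‖(1 - t) • (a - c)‖ + ‖t • (b - c)‖ :=
        norm_add_le _ _
    _ = (1 - t) * ‖a - c‖ + t * ‖b - c‖ := by
        rw [norm_smul, norm_smul, Real.norm_eq_abs, Real.norm_eq_abs,
          abs_of_nonneg (by linarith), abs_of_nonneg ht0]

theorem ahm_linear_rate_x {X : Type*} [NormedAddCommGroup X] [NormedSpace ℝ X]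
    (C : Set X) (hC : Convex ℝ C) (T U : X → X)
    (hTC : Set.MapsTo T C C) (hUC : Set.MapsTo U C C)
    (hT : ∀ a ∈ C, ∀ b ∈ C, ‖T a - T b‖ ≤ ‖a - b‖)
    (hU : ∀ a ∈ C, ∀ b ∈ C, ‖U a - U b‖ ≤ ‖a - b‖)
    (u : X) (hu : u ∈ C)
    (p : X) (hp : p ∈ C) (hTp : T p = p) (hUp : U p = p)
    (β : ℝ) (hβ : β ∈ Set.Ioo (0:ℝ) 1)
    (x y : ℕ → X) (hx0 : x 0 ∈ C)
    (hy : ∀ n : ℕ, y n = (1 - 2 / ((n : ℝ) + 2)) • T (x n) + (2 / ((n : ℝ) + 2)) • u)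
    (hx : ∀ n : ℕ, x (n + 1) = (1 - β) • U (y n) + β • y n)
    (K : ℝ) (hK0 : 0 < K) (hK : max ‖x 0 - p‖ ‖u - p‖ ≤ K)
 :
    ∀ n : ℕ, ‖x n - x (n + 1)‖ ≤ 4 * K / ((n : ℝ) + 2) := by
  obtain ⟨hβ0, hβ1⟩ := hβ
  set α : ℕ → ℝ := fun n => 2 / ((n : ℝ) + 2) with hα
  have hn2 : ∀ n : ℕ, (0:ℝ) < (n : ℝ) + 2 := fun n => by positivity
  have hα0 : ∀ n : ℕ, 0 ≤ α n := fun n => by positivity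
  have hα1 : ∀ n : ℕ, α n ≤ 1 := fun n => by
    rw [hα]
    rw [div_le_one (hn2 n)]
    have : (0:ℝ) ≤ (n:ℝ) := Nat.cast_nonneg n
    linarith
  have hKx0 : ‖x 0 - p‖ ≤ K := le_trans (le_max_left _ _) hK
  have hKu : ‖u - p‖ ≤ K := le_trans (le_max_right _ _) hK
  -- membership
  have hymem : ∀ n : ℕ, x n ∈ C → y n ∈ C := by
    intro n hxn
    rw [hy n]
    exact hC (hTC hxn) hu (by linarith [hα1 n]) (hα0 n) (by ring)
  have hxmem : ∀ n : ℕ, x n ∈ C := by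
    intro n
    induction n with
    | zero => exact hx0
    | succ m ih =>
      rw [hx m]
      exact hC (hUC (hymem m ih)) (hymem m ih) (by linarith) (le_of_lt hβ0) (by ring)
  -- distance to p bounds
  have hxK : ∀ n : ℕ, ‖x n - p‖ ≤ K := by
    intro n
    induction n with
    | zero => exact hKx0
    | succ m ih =>
      have hyb : ‖y m - p‖ ≤ K := by
        rw [hy m]
        calc ‖(1 - α m) • T (x m) + (α m) • u - p‖
            ≤ (1 - α m) * ‖T (x m) - p‖ + α m * ‖u - p‖ :=
              ahm_comb_norm_sub (α m) (hα0 m) (hα1 m) _ _ _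
          _ ≤ (1 - α m) * K + α m * K := by
              have hT1 : ‖T (x m) - p‖ ≤ K := by
                calc ‖T (x m) - p‖ = ‖T (x m) - T p‖ := by rw [hTp]
                  _ ≤ ‖x m - p‖ := hT _ (hxmem m) _ hp
                  _ ≤ K := ih
              have h1 := hα0 m
              have h2 := hα1 m
              gcongr <;> linarith
          _ = K := by ring
      rw [hx m]
      calc ‖(1 - β) • U (y m) + β • y m - p‖
          ≤ (1 - β) * ‖U (y m) - p‖ + β * ‖y m - p‖ :=
            ahm_comb_norm_sub β (le_of_lt hβ0) (le_of_lt hβ1) _ _ _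
        _ ≤ (1 - β) * K + β * K := by
            have hU1 : ‖U (y m) - p‖ ≤ K := by
              calc ‖U (y m) - p‖ = ‖U (y m) - U p‖ := by rw [hUp]
                _ ≤ ‖y m - p‖ := hU _ (hymem m (hxmem m)) _ hp
                _ ≤ K := hyb
            gcongr <;> linarith
        _ = K := by ring
  -- step estimate: ‖x(n+1)-x(n+2)‖ ≤ ‖y n - y (n+1)‖
  have hstep1 : ∀ n : ℕ, ‖x (n+1) - x (n+2)‖ ≤ ‖y n - y (n+1)‖ := by
    intro n
    rw [hx n, hx (n+1)]
    have h : (1 - β) • U (y n) + β • y n - ((1 - β) • U (y (n+1)) + β • y (n+1))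
        = (1 - β) • (U (y n) - U (y (n+1))) + β • (y n - y (n+1)) := by module
    rw [h]
    calc ‖(1 - β) • (U (y n) - U (y (n+1))) + β • (y n - y (n+1))‖
        ≤ (1 - β) * ‖U (y n) - U (y (n+1))‖ + β * ‖y n - y (n+1)‖ := by
          refine (norm_add_le _ _).trans ?_
          rw [norm_smul, norm_smul, Real.norm_eq_abs, Real.norm_eq_abs,
            abs_of_nonneg (by linarith), abs_of_nonneg (le_of_lt hβ0)]
      _ ≤ (1 - β) * ‖y n - y (n+1)‖ + β * ‖y n - y (n+1)‖ := by
          gcongr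
          · exact hU _ (hymem n (hxmem n)) _ (hymem (n+1) (hxmem (n+1)))
      _ = ‖y n - y (n+1)‖ := by ring
  -- y difference estimate
  have hstep2 : ∀ n : ℕ,
      ‖y n - y (n+1)‖ ≤ (1 - α (n+1)) * ‖x n - x (n+1)‖ + (α n - α (n+1)) * (2 * K) := by
    intro n
    rw [hy n, hy (n+1)]
    have hαn : α (n+1) ≤ α n := by
      simp only [hα]
      push_cast
      apply div_le_div_of_nonneg_left (by norm_num) (hn2 n)
      linarith
    have h' : (1 - 2 / ((n:ℝ) + 2)) • T (x n) + (2 / ((n:ℝ) + 2)) • u -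
          ((1 - 2 / (((n+1:ℕ):ℝ) + 2)) • T (x (n+1)) + (2 / (((n+1:ℕ):ℝ) + 2)) • u)
        = (1 - α (n+1)) • (T (x n) - T (x (n+1))) + (α n - α (n+1)) • (u - T (x n)) := by
      simp only [hα]
      module
    rw [h']
    calc ‖(1 - α (n+1)) • (T (x n) - T (x (n+1))) + (α n - α (n+1)) • (u - T (x n))‖
        ≤ (1 - α (n+1)) * ‖T (x n) - T (x (n+1))‖ + (α n - α (n+1)) * ‖u - T (x n)‖ := by
          refine (norm_add_le _ _).trans ?_
          rw [norm_smul, norm_smul, Real.norm_eq_abs, Real.norm_eq_abs,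
            abs_of_nonneg (by linarith [hα1 (n+1)]), abs_of_nonneg (by linarith)]
      _ ≤ (1 - α (n+1)) * ‖x n - x (n+1)‖ + (α n - α (n+1)) * (2 * K) := by
          gcongr
          · linarith [hα1 (n+1)]
          · exact hT _ (hxmem n) _ (hxmem (n+1))
          · calc ‖u - T (x n)‖ ≤ ‖u - p‖ + ‖p - T (x n)‖ :=
                norm_sub_le_norm_sub_add_norm_sub _ _ _
              _ ≤ K + K := by
                  refine add_le_add hKu ?_
                  calc ‖p - T (x n)‖ = ‖T p - T (x n)‖ := by rw [hTp]
                    _ ≤ ‖p - x n‖ := hT _ hp _ (hxmem n)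
                    _ = ‖x n - p‖ := norm_sub_rev _ _
                    _ ≤ K := hxK n
              _ = 2 * K := by ring
  -- main induction
  intro n
  induction n with
  | zero =>
    calc ‖x 0 - x 1‖ ≤ ‖x 0 - p‖ + ‖p - x 1‖ := norm_sub_le_norm_sub_add_norm_sub _ _ _
      _ ≤ K + K := add_le_add hKx0 (by rw [norm_sub_rev]; exact hxK 1)
      _ ≤ 4 * K / (((0:ℕ):ℝ) + 2) := by push_cast; linarith
  | succ m ih =>
    have h1 := hstep1 m
    have h2 := hstep2 m
    have key : ‖x (m+1) - x (m+2)‖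
        ≤ (1 - α (m+1)) * (4 * K / ((m:ℝ) + 2)) + (α m - α (m+1)) * (2 * K) := by
      refine h1.trans (h2.trans ?_)
      gcongr
      linarith [hα1 (m+1)]
    refine key.trans (le_of_eq ?_)
    simp only [hα]
    have hm2 := hn2 m
    push_cast
    have hm3 : (0:ℝ) < (m:ℝ) + 3 := by linarith
    field_simp
    ring
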